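/- In Twyst-off, if (a,b,c) is a P position with 0 < a < c, then a < b. -/

import Mathlib

namespace TwystOff

/-- Contraction: merge the two neighbors of an interior zero stack; delete empty end stacks. -/
def contract : List ℕ → List ℕ
  | [] => []
  | a :: t =>
    if a = 0 then contract t
    else match t with
      | [] => [a]
      | [b] => if b = 0 then [a] else [a, b]
      | b :: c :: r => if b = 0 then contract ((a + c) :: r) else a :: contract (b :: c :: r)
termination_by l => l.length

theorem contract_sum (l : List ℕ) : (contract l).sum = l.sum := by
  induction l using contract.induct <;> rw [contract.eq_def] <;> simp_all <;> omega

/-- A raw move: remove `k > 0` tiles from an end stack, or `k` tiles from each of two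
consecutive stacks; the result is then contracted. -/
def premove (p q : List ℕ) : Prop :=
  (∃ a t k, p = a :: t ∧ 0 < k ∧ k ≤ a ∧ q = contract ((a - k) :: t)) ∨
  (∃ a t k, p = t ++ [a] ∧ 0 < k ∧ k ≤ a ∧ q = contract (t ++ [a - k])) ∨
  (∃ α a b β k, p = α ++ a :: b :: β ∧ 0 < k ∧ k ≤ a ∧ k ≤ b ∧
      q = contract (α ++ (a - k) :: (b - k) :: β))

/-- Moves of Twyst-off (positions are considered up to contraction). -/
def Move (p q : List ℕ) : Prop := premove (contract p) q

theorem Move.sum_lt {p q : List ℕ} (h : Move p q) : q.sum < p.sum := by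
  rw [← contract_sum p]
  rcases h with ⟨a, t, k, hp, hk, hka, hq⟩ | ⟨a, t, k, hp, hk, hka, hq⟩ |
    ⟨α, a, b, β, k, hp, hk, hka, hkb, hq⟩ <;>
    subst hq <;> rw [contract_sum, hp] <;> simp [List.sum_append] <;> omega

/-- P positions: every option is an N position (i.e. no option is itself P). -/
def PPos (p : List ℕ) : Prop := ∀ q, Move p q → ¬ PPos q
termination_by p.sum
decreasing_by exact Move.sum_lt (by assumption)

/-- N positions: some option is a P position. -/
def NPos (p : List ℕ) : Prop := ∃ q, Move p q ∧ PPos q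

end TwystOff


namespace TwystOff

theorem PPos_iff (p : List ℕ) : PPos p ↔ ∀ q, Move p q → ¬ PPos q := by
  rw [PPos]

theorem contract_single (a : ℕ) : contract [a] = if a = 0 then [] else [a] := by
  rw [contract.eq_def]; split_ifs <;> simp_all [contract]

theorem contract_pair (a b : ℕ) :
    contract [a, b] = if a = 0 then (if b = 0 then [] else [b]) else
      if b = 0 then [a] else [a, b] := by
  rw [contract.eq_def]; split_ifs <;> simp_all [contract_single]

theorem contract_triple (a b c : ℕ) :
    contract [a, b, c] = if a = 0 then contract [b, c] else
      if b = 0 then [a + c] else if c = 0 then [a, b] else [a, b, c] := by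
  rw [contract.eq_def]; split_ifs <;> simp_all [contract_single, contract_pair]

theorem contract_pos2 {a b : ℕ} (ha : a ≠ 0) (hb : b ≠ 0) : contract [a, b] = [a, b] := by
  rw [contract_pair]; split_ifs <;> simp_all

theorem contract_pos3 {a b c : ℕ} (ha : a ≠ 0) (hb : b ≠ 0) (hc : c ≠ 0) :
    contract [a, b, c] = [a, b, c] := by
  rw [contract_triple]; split_ifs <;> simp_all

theorem contract_length (l : List ℕ) : (contract l).length ≤ l.length := by
  induction l using contract.induct <;> rw [contract.eq_def] <;> simp_all <;> omega

theorem contract_reverse_le3 (l : List ℕ) (h : l.length ≤ 3) :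
    contract l.reverse = (contract l).reverse := by
  match l with
  | [] => simp [contract]
  | [a] => simp [contract_single]; split_ifs <;> rfl
  | [a, b] =>
    simp only [List.reverse_cons, List.reverse_nil, List.nil_append, List.cons_append]
    rw [contract_pair, contract_pair]
    split_ifs <;> simp_all
  | [a, b, c] =>
    simp only [List.reverse_cons, List.reverse_nil, List.nil_append, List.cons_append]
    rw [contract_triple, contract_triple]
    split_ifs <;> simp_all [contract_pair] <;>
      first | omega | (split_ifs <;> simp_all <;> omega)
  | _ :: _ :: _ :: _ :: _ => simp at h; omega

theorem premove_length {m q : List ℕ} (h : premove m q) : q.length ≤ m.length := by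
  rcases h with ⟨a, t, k, hp, hk, hka, hq⟩ | ⟨a, t, k, hp, hk, hka, hq⟩ |
    ⟨α, a, b, β, k, hp, hk, hka, hkb, hq⟩ <;>
    subst hq <;> subst hp <;> refine le_trans (contract_length _) ?_ <;> simp

theorem premove_reverse {m q : List ℕ} (hm : m.length ≤ 3) (h : premove m q) :
    premove m.reverse q.reverse := by
  rcases h with ⟨a, t, k, hp, hk, hka, hq⟩ | ⟨a, t, k, hp, hk, hka, hq⟩ |
    ⟨α, a, b, β, k, hp, hk, hka, hkb, hq⟩
  · refine Or.inr (Or.inl ⟨a, t.reverse, k, by simp [hp], hk, hka, ?_⟩)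
    subst hp hq
    rw [← contract_reverse_le3 _ (by simpa using hm)]
    simp
  · refine Or.inl ⟨a, t.reverse, k, by simp [hp], hk, hka, ?_⟩
    subst hp hq
    rw [← contract_reverse_le3 _ (by simpa using hm)]
    simp
  · refine Or.inr (Or.inr ⟨β.reverse, b, a, α.reverse, k, by simp [hp], hk, hkb, hka, ?_⟩)
    subst hp hq
    rw [← contract_reverse_le3 _ (by simpa using hm)]
    simp

theorem PPos_nil : PPos [] := by
  rw [PPos_iff]
  intro q hq
  rcases hq with ⟨a, t, k, hp, _⟩ | ⟨a, t, k, hp, _⟩ | ⟨α, a, b, β, k, hp, _⟩ <;>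
    simp [contract] at hp

theorem single_N {p : List ℕ} {m : ℕ} (hc : contract p = [m]) (hm : m ≠ 0) : ¬ PPos p := by
  intro hP
  have hmv : Move p [] := by
    refine Or.inl ⟨m, [], m, by rw [hc], by omega, le_rfl, ?_⟩
    simp [contract_single]
  exact ((PPos_iff _).mp hP) [] hmv PPos_nil

theorem PPos_rev : ∀ n : ℕ, ∀ p : List ℕ, p.sum ≤ n → p.length ≤ 3 → PPos p → PPos p.reverse := by
  intro n
  induction n with
  | zero =>
    intro p hs hl hp
    rw [PPos_iff]
    intro q hq
    have := Move.sum_lt hq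
    rw [List.sum_reverse] at this
    omega
  | succ n ih =>
    intro p hs hl hp
    rw [PPos_iff]
    intro q hq hPq
    have hq' : premove ((contract p).reverse) q := by
      rwa [Move, contract_reverse_le3 _ hl] at hq
    have hlen : ((contract p).reverse).length ≤ 3 :=
      le_trans (by simpa using contract_length p) hl
    have hmv : Move p q.reverse := by
      have := premove_reverse hlen hq'
      rwa [List.reverse_reverse] at this
    have hqlen : q.length ≤ 3 := le_trans (premove_length hq') hlen
    have hqsum : q.sum ≤ n := by
      have := Move.sum_lt hq
      rw [List.sum_reverse] at this
      omega
    exact ((PPos_iff _).mp hp) q.reverse hmv (ih q hqsum hqlen hPq)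

theorem PPos_reverse {p : List ℕ} (hl : p.length ≤ 3) (hp : PPos p) : PPos p.reverse :=
  PPos_rev p.sum p le_rfl hl hp

theorem key : ∀ n x y z : ℕ, x + y + z ≤ n → 0 < x → x < z → y ≤ x → ¬ PPos [x, y, z] := by
  intro n
  induction n with
  | zero => intro x y z hs hx hxz _ _; omega
  | succ n ih =>
    intro x y z hsum hx hxz hyx hP
    rcases Nat.eq_zero_or_pos y with hy | hy
    · -- y = 0 : contract is a single stack, remove it all
      subst hy
      have hc : contract [x, 0, z] = [x + z] := by
        rw [contract_triple]; split_ifs <;> simp_all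
      have hmv : Move [x, 0, z] [] := by
        refine Or.inl ⟨x + z, [], x + z, by rw [hc], by omega, le_rfl, ?_⟩
        simp [contract_single]
      exact ((PPos_iff _).mp hP) [] hmv PPos_nil
    · have hcon : contract [x, y, z] = [x, y, z] :=
        contract_pos3 (by omega) (by omega) (by omega)
      -- every right-end move of (x,y,z) is to an N position
      have hopt : ∀ t, t < z → ¬ PPos (contract [x, y, t]) := by
        intro t ht
        refine ((PPos_iff _).mp hP) _ ?_
        show premove (contract [x, y, z]) _
        rw [hcon]
        refine Or.inr (Or.inl ⟨z, [x, y], z - t, rfl, by omega, by omega, ?_⟩)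
        have h1 : z - (z - t) = t := by omega
        simp [h1]
      have hoptt : ∀ t, 0 < t → t < z → ¬ PPos [x, y, t] := by
        intro t ht1 ht2
        have := hopt t ht2
        rwa [contract_pos3 (by omega) (by omega) (by omega)] at this
      have hxy_opt : ¬ PPos [x, y] := by
        have h3 := hopt 0 (by omega)
        have h0 : contract [x, y, 0] = [x, y] := by
          rw [contract_triple]
          simp [(show ¬ x = 0 by omega), (show ¬ y = 0 by omega)]
        rwa [h0] at h3
      -- in particular (x,y,x) is an N position
      have hconx : contract [x, y, x] = [x, y, x] :=
        contract_pos3 (by omega) (by omega) (by omega)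
      have hxyx : ¬ PPos [x, y, x] := hoptt x (by omega) hxz
      -- so it has a P option
      rw [PPos_iff] at hxyx
      push_neg at hxyx
      obtain ⟨q, hmv, hq⟩ := hxyx
      have hmv' : premove [x, y, x] q := by rwa [Move, hconx] at hmv
      -- but every option of (x,y,x) is N: contradiction
      rcases hmv' with ⟨a, t, k, heq, hk, hka, hqe⟩ | ⟨a, t, k, heq, hk, hka, hqe⟩ |
        ⟨α, a, b, β, k, heq, hk, hka, hkb, hqe⟩
      · -- left-end move
        obtain ⟨h1, h2⟩ : x = a ∧ [y, x] = t := by simpa using heq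
        subst h1; subst h2
        rcases eq_or_lt_of_le hka with hkx | hkx
        · -- remove all of the left stack: q = [y, x], reversal of the option (x,y)
          have hqv : q = [y, x] := by
            rw [hqe, (show x - k = 0 by omega), contract_triple]
            simp [contract_pos2 (show y ≠ 0 by omega) (show x ≠ 0 by omega)]
          rw [hqv] at hq
          have h2 : PPos [x, y] := by
            have := PPos_reverse (p := [y, x]) (by simp) hq
            simpa using this
          exact hxy_opt h2
        · -- q = [x-k, y, x], reversal of the option (x,y,x-k)
          have hqv : q = [x - k, y, x] := by
            rw [hqe]; exact contract_pos3 (by omega) (by omega) (by omega)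
          rw [hqv] at hq
          have h2 : PPos [x, y, x - k] := by
            have := PPos_reverse (p := [x - k, y, x]) (by simp) hq
            simpa using this
          exact hoptt (x - k) (by omega) (by omega) h2
      · -- right-end move
        rcases t with _ | ⟨t1, t⟩
        · simp at heq
        rcases t with _ | ⟨t2, t⟩
        · simp at heq
        rcases t with _ | ⟨t3, t⟩
        · obtain ⟨h1, h2, h3⟩ : x = t1 ∧ y = t2 ∧ x = a := by simpa using heq
          subst h1; subst h2; subst h3
          rcases eq_or_lt_of_le hka with hkx | hkx
          · have hqv : q = [x, y] := by
              rw [hqe, (show x - k = 0 by omega)]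
              show contract [x, y, 0] = [x, y]
              rw [contract_triple]
              simp [(show ¬ x = 0 by omega), (show ¬ y = 0 by omega)]
            rw [hqv] at hq
            exact hxy_opt hq
          · have hqv : q = [x, y, x - k] := by
              rw [hqe]
              show contract [x, y, x - k] = [x, y, x - k]
              exact contract_pos3 (by omega) (by omega) (by omega)
            rw [hqv] at hq
            exact hoptt (x - k) (by omega) (by omega) hq
        · simp at heq
      · -- pair moves
        rcases α with _ | ⟨a1, α⟩
        · -- pair (x,y)
          obtain ⟨h1, h2, h3⟩ : x = a ∧ y = b ∧ [x] = β := by simpa using heq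
          subst h1; subst h2; subst h3
          simp only [List.nil_append] at hqe
          rcases eq_or_lt_of_le hkb with hky | hky
          · -- k = y : result contracts to a single stack [x - k + x]
            have hqv : q = [x - k + x] := by
              rw [hqe, (show y - k = 0 by omega), contract_triple]
              by_cases h0 : x - k = 0
              · rw [if_pos h0, contract_pair]
                simp [(show ¬ x = 0 by omega), h0]
              · rw [if_neg h0, if_pos rfl]
            refine single_N (p := q) (m := x - k + x) ?_ (by omega) hq
            rw [hqv, contract_single]
            simp [(show ¬ x - k + x = 0 by omega)]; omega
          · -- k < y : descent
            have hqv : q = [x - k, y - k, x] := by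
              rw [hqe]; exact contract_pos3 (by omega) (by omega) (by omega)
            rw [hqv] at hq
            exact ih (x - k) (y - k) x (by omega) (by omega) (by omega) (by omega) hq
        · rcases α with _ | ⟨a2, α⟩
          · -- pair (y,x)
            obtain ⟨h1, h2, h3, h4⟩ : x = a1 ∧ y = a ∧ x = b ∧ β = [] := by simpa using heq
            subst h1; subst h2; subst h3; subst h4
            simp only [List.cons_append, List.nil_append] at hqe
            rcases eq_or_lt_of_le hka with hky | hky
            · -- k = y : single stack [x + (x - k)]
              have hqv : q = [x + (x - k)] := by
                rw [hqe, (show y - k = 0 by omega), contract_triple]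
                simp [(show ¬ x = 0 by omega)]
              refine single_N (p := q) (m := x + (x - k)) ?_ (by omega) hq
              rw [hqv, contract_single]
              simp [(show ¬ x + (x - k) = 0 by omega)]; omega
            · -- k < y : descent after reversal
              have hqv : q = [x, y - k, x - k] := by
                rw [hqe]; exact contract_pos3 (by omega) (by omega) (by omega)
              rw [hqv] at hq
              have h2 : PPos [x - k, y - k, x] := by
                have := PPos_reverse (p := [x, y - k, x - k]) (by simp) hq
                simpa using this
              exact ih (x - k) (y - k) x (by omega) (by omega) (by omega) (by omega) h2
          · -- α too long
            have := congrArg List.length heq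
            simp at this
            omega

end TwystOff


theorem nonpalindrome_a_lt_b (a b c : ℕ) (h : TwystOff.PPos [a, b, c])
    (ha : 0 < a) (hac : a < c) : a < b := by
  by_contra hb
  exact TwystOff.key (a + b + c) a b c le_rfl ha hac (by omega) h
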